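/- Let q = a + v ∈ ℍ_ℝ with v ≠ 0 and a > 1, let w = a + i|v| ∈ ℂ, and suppose for each t ∈ ℝ the decomposition B_q(t) = Re B_w(t) + (v/|v|) Im B_w(t) holds with {B_q(ℓ)}_{ℓ∈ℤ} absolutely summable. Then for |z| = 1, the complex quaternion ∑_{ℓ∈ℤ} B_q(ℓ) z^ℓ is invertible in ℍ_ℂ if and only if (∑_ℓ B_w(ℓ) z^ℓ)(∑_ℓ B_{w̄}(ℓ) z^ℓ) ≠ 0, where B_{w̄}(ℓ) = conjugate of B_w(ℓ); and in that case its inverse is (∑_ℓ [Re B_w(ℓ) - (v/|v|) Im B_w(ℓ)] z^ℓ) / ((∑_ℓ B_w(ℓ) z^ℓ)(∑_ℓ B_{w̄}(ℓ) z^ℓ)). -/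

import Mathlib

open Quaternion

noncomputable instance : NormedAddCommGroup ℍ[ℂ] :=
  NormedAddCommGroup.induced ℍ[ℂ] (Fin 4 → ℂ)
    (QuaternionAlgebra.linearEquivTuple (-1 : ℂ) (0 : ℂ) (-1 : ℂ)).toLinearMap
    (QuaternionAlgebra.linearEquivTuple (-1 : ℂ) (0 : ℂ) (-1 : ℂ)).injective

set_option maxHeartbeats 1000000
set_option synthInstance.maxHeartbeats 400000

/-- The canonical embedding of the real quaternions into the complexified quaternions. -/
def toC (q : ℍ[ℝ]) : ℍ[ℂ] := ⟨(q.re : ℂ), (q.imI : ℂ), (q.imJ : ℂ), (q.imK : ℂ)⟩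

noncomputable instance : NormedSpace ℂ ℍ[ℂ] :=
  NormedSpace.induced ℂ ℍ[ℂ] (Fin 4 → ℂ)
    (QuaternionAlgebra.linearEquivTuple (-1 : ℂ) (0 : ℂ) (-1 : ℂ)).toLinearMap

lemma toC_mul_self (v : ℍ[ℝ]) (h : v.re = 0) :
    toC v * toC v = ((-(‖v‖ ^ 2) : ℝ) : ℂ) • 1 := by
  have hn : ‖v‖ ^ 2 = v.imI ^ 2 + v.imJ ^ 2 + v.imK ^ 2 := by
    rw [sq, ← Quaternion.normSq_eq_norm_mul_self, Quaternion.normSq_def', h]; ring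
  ext <;> simp only [Quaternion.re_mul, Quaternion.imI_mul,
    Quaternion.imJ_mul, Quaternion.imK_mul] <;> simp [toC, hn, h] <;> push_cast <;> ring

lemma toC_ne_zero (v : ℍ[ℝ]) (h : v ≠ 0) : toC v ≠ 0 := by
  intro h0
  apply h
  have h1 := congrArg QuaternionAlgebra.re h0
  have h2 := congrArg QuaternionAlgebra.imI h0
  have h3 := congrArg QuaternionAlgebra.imJ h0
  have h4 := congrArg QuaternionAlgebra.imK h0
  simp only [toC, Quaternion.re_zero, Quaternion.imI_zero,
    Quaternion.imJ_zero, Quaternion.imK_zero, Complex.ofReal_eq_zero] at h1 h2 h3 h4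
  ext <;> simp [h1, h2, h3, h4]

instance : IsScalarTower ℂ ℍ[ℂ] ℍ[ℂ] where
  smul_assoc x a b := by
    ext <;> simp [Quaternion.re_mul, Quaternion.imI_mul,
      Quaternion.imJ_mul, Quaternion.imK_mul, smul_eq_mul] <;> ring

instance : SMulCommClass ℂ ℍ[ℂ] ℍ[ℂ] where
  smul_comm x a b := by
    ext <;> simp [Quaternion.re_mul, Quaternion.imI_mul,
      Quaternion.imJ_mul, Quaternion.imK_mul, smul_eq_mul] <;> ring

lemma real_smul_quat (r : ℝ) (x : ℍ[ℂ]) : r • x = ((r : ℂ)) • x := by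
  ext <;> simp [Complex.real_smul] <;> rfl

lemma conj_eq' (x : ℂ) : starRingEnd ℂ x = (x.re : ℂ) - (x.im : ℂ) * Complex.I := by
  apply Complex.ext <;> simp

/-- Let `q = a + v` with `v ≠ 0`, `a > 1`, `w = a + i|v|`, and suppose
`B_q(ℓ) = Re B_w(ℓ) + (v/|v|) Im B_w(ℓ)` with `{B_q(ℓ)}` absolutely summable.  For `|z| = 1`,
the complex quaternion `∑_ℓ B_q(ℓ) z^ℓ` is invertible in `ℍ_ℂ` iff
`(∑_ℓ B_w(ℓ) z^ℓ)(∑_ℓ B_{w̄}(ℓ) z^ℓ) ≠ 0`, and in that case its inverse is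
`(∑_ℓ [Re B_w(ℓ) - (v/|v|) Im B_w(ℓ)] z^ℓ) / ((∑_ℓ B_w(ℓ) z^ℓ)(∑_ℓ B_{w̄}(ℓ) z^ℓ))`. -/
theorem spline_symbol_invertible (q : ℍ[ℝ]) (hv : q.im ≠ 0) (ha : 1 < q.re)
    (w : ℂ) (hw : w = (q.re : ℂ) + (‖q.im‖ : ℂ) * Complex.I)
    (Bw : ℤ → ℂ) (hsum : Summable fun ℓ : ℤ => ‖Bw ℓ‖)
    (Bq : ℤ → ℍ[ℂ])
    (hBq : ∀ ℓ : ℤ, Bq ℓ = (Bw ℓ).re • (1 : ℍ[ℂ]) + ((Bw ℓ).im / ‖q.im‖) • toC q.im)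
    (z : ℂ) (hz : ‖z‖ = 1) :
    (IsUnit (∑' ℓ : ℤ, (z ^ ℓ) • Bq ℓ) ↔
        (∑' ℓ : ℤ, Bw ℓ * z ^ ℓ) * (∑' ℓ : ℤ, starRingEnd ℂ (Bw ℓ) * z ^ ℓ) ≠ 0) ∧
      ((∑' ℓ : ℤ, Bw ℓ * z ^ ℓ) * (∑' ℓ : ℤ, starRingEnd ℂ (Bw ℓ) * z ^ ℓ) ≠ 0 →
        (∑' ℓ : ℤ, (z ^ ℓ) • Bq ℓ) *
            (((∑' ℓ : ℤ, Bw ℓ * z ^ ℓ) * (∑' ℓ : ℤ, starRingEnd ℂ (Bw ℓ) * z ^ ℓ))⁻¹ •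
              ∑' ℓ : ℤ, (z ^ ℓ) •
                ((Bw ℓ).re • (1 : ℍ[ℂ]) - ((Bw ℓ).im / ‖q.im‖) • toC q.im)) = 1 ∧
          (((∑' ℓ : ℤ, Bw ℓ * z ^ ℓ) * (∑' ℓ : ℤ, starRingEnd ℂ (Bw ℓ) * z ^ ℓ))⁻¹ •
              ∑' ℓ : ℤ, (z ^ ℓ) •
                ((Bw ℓ).re • (1 : ℍ[ℂ]) - ((Bw ℓ).im / ‖q.im‖) • toC q.im)) *
            (∑' ℓ : ℤ, (z ^ ℓ) • Bq ℓ) = 1) := by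
  have hvn : ‖q.im‖ ≠ 0 := norm_ne_zero_iff.mpr hv
  set n : ℂ := (‖q.im‖ : ℂ) with hn
  have hnne : n ≠ 0 := by simpa [hn] using hvn
  set u : ℍ[ℂ] := toC q.im with hu
  have hune : u ≠ 0 := toC_ne_zero _ hv
  have hure : u.re = 0 := by simp [hu, toC, Quaternion.re_im]
  have huu : u * u = (-(n ^ 2)) • (1 : ℍ[ℂ]) := by
    rw [hu, toC_mul_self _ (Quaternion.re_im q)]
    congr 1
    push_cast [hn]
    ring
  -- abbreviations for the real and imaginary coefficient series
  set c : ℤ → ℂ := fun ℓ => ((Bw ℓ).re : ℂ) with hc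
  set d : ℤ → ℂ := fun ℓ => ((Bw ℓ).im : ℂ) with hd
  have hzabs : ∀ ℓ : ℤ, ‖z ^ ℓ‖ = 1 := by
    intro ℓ; rw [norm_zpow, hz, one_zpow]
  have hsc : Summable fun ℓ : ℤ => z ^ ℓ * c ℓ := by
    apply Summable.of_norm
    apply hsum.of_nonneg_of_le (fun _ => norm_nonneg _)
    intro ℓ
    rw [norm_mul, hzabs, one_mul, hc]
    simpa using Complex.abs_re_le_norm (Bw ℓ)
  have hsd : Summable fun ℓ : ℤ => z ^ ℓ * d ℓ := by
    apply Summable.of_norm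
    apply hsum.of_nonneg_of_le (fun _ => norm_nonneg _)
    intro ℓ
    rw [norm_mul, hzabs, one_mul, hd]
    simpa using Complex.abs_im_le_norm (Bw ℓ)
  set X : ℂ := ∑' ℓ : ℤ, z ^ ℓ * c ℓ with hX
  set Y : ℂ := ∑' ℓ : ℤ, z ^ ℓ * d ℓ with hY
  -- identify A and Ā
  have hA : (∑' ℓ : ℤ, Bw ℓ * z ^ ℓ) = X + Complex.I * Y := by
    have h1 : ∀ ℓ : ℤ, Bw ℓ * z ^ ℓ = z ^ ℓ * c ℓ + Complex.I * (z ^ ℓ * d ℓ) := by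
      intro ℓ
      have h := Complex.re_add_im (Bw ℓ)
      simp only [hc, hd]
      linear_combination -z ^ ℓ * h
    rw [tsum_congr h1, hsc.tsum_add (hsd.mul_left _), tsum_mul_left, hX, hY]
  have hAbar : (∑' ℓ : ℤ, starRingEnd ℂ (Bw ℓ) * z ^ ℓ) = X - Complex.I * Y := by
    have h1 : ∀ ℓ : ℤ, starRingEnd ℂ (Bw ℓ) * z ^ ℓ
        = z ^ ℓ * c ℓ - Complex.I * (z ^ ℓ * d ℓ) := by
      intro ℓ
      rw [conj_eq' (Bw ℓ)]
      simp only [hc, hd]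
      ring
    rw [tsum_congr h1, hsc.tsum_sub (hsd.mul_left _), tsum_mul_left, hX, hY]
  have hprod : (∑' ℓ : ℤ, Bw ℓ * z ^ ℓ) * (∑' ℓ : ℤ, starRingEnd ℂ (Bw ℓ) * z ^ ℓ)
      = X ^ 2 + Y ^ 2 := by
    rw [hA, hAbar]
    linear_combination (-(Y ^ 2)) * Complex.I_sq
  -- identify the quaternionic sums
  have hterm : ∀ ℓ : ℤ, (z ^ ℓ) • Bq ℓ
      = (z ^ ℓ * c ℓ) • (1 : ℍ[ℂ]) + (z ^ ℓ * d ℓ / n) • u := by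
    intro ℓ
    rw [hBq, smul_add, real_smul_quat, real_smul_quat, smul_smul, smul_smul]
    congr 2
    simp only [hd, hn]
    push_cast
    ring
  have htermT : ∀ ℓ : ℤ, (z ^ ℓ) • ((Bw ℓ).re • (1 : ℍ[ℂ]) - ((Bw ℓ).im / ‖q.im‖) • toC q.im)
      = (z ^ ℓ * c ℓ) • (1 : ℍ[ℂ]) - (z ^ ℓ * d ℓ / n) • u := by
    intro ℓ
    rw [smul_sub, real_smul_quat, real_smul_quat, smul_smul, smul_smul]
    congr 2
    simp only [hd, hn]
    push_cast
    ring
  have hS : (∑' ℓ : ℤ, (z ^ ℓ) • Bq ℓ) = X • (1 : ℍ[ℂ]) + (Y / n) • u := by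
    rw [tsum_congr hterm,
      (hsc.smul_const 1).tsum_add ((hsd.div_const n).smul_const u),
      hsc.tsum_smul_const, (hsd.div_const n).tsum_smul_const, tsum_div_const]
  have hT : (∑' ℓ : ℤ, (z ^ ℓ) •
        ((Bw ℓ).re • (1 : ℍ[ℂ]) - ((Bw ℓ).im / ‖q.im‖) • toC q.im))
      = X • (1 : ℍ[ℂ]) - (Y / n) • u := by
    rw [tsum_congr htermT,
      (hsc.smul_const 1).tsum_sub ((hsd.div_const n).smul_const u),
      hsc.tsum_smul_const, (hsd.div_const n).tsum_smul_const, tsum_div_const]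
  -- the key algebraic products
  have key : ∀ a b : ℂ, (a • (1 : ℍ[ℂ]) + b • u) * (a • (1 : ℍ[ℂ]) - b • u)
      = (a ^ 2 + b ^ 2 * n ^ 2) • 1 := by
    intro a b
    simp only [mul_sub, add_mul, smul_mul_smul_comm, one_mul, mul_one, huu, smul_smul]
    match_scalars <;> ring
  have key' : ∀ a b : ℂ, (a • (1 : ℍ[ℂ]) - b • u) * (a • (1 : ℍ[ℂ]) + b • u)
      = (a ^ 2 + b ^ 2 * n ^ 2) • 1 := by
    intro a b
    simp only [mul_add, sub_mul, smul_mul_smul_comm, one_mul, mul_one, huu, smul_smul]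
    match_scalars <;> ring
  have hY2 : (Y / n) ^ 2 * n ^ 2 = Y ^ 2 := by
    field_simp
  have hST : (∑' ℓ : ℤ, (z ^ ℓ) • Bq ℓ) *
      (∑' ℓ : ℤ, (z ^ ℓ) • ((Bw ℓ).re • (1 : ℍ[ℂ]) - ((Bw ℓ).im / ‖q.im‖) • toC q.im))
      = (X ^ 2 + Y ^ 2) • 1 := by
    rw [hS, hT, key, hY2]
  have hTS : (∑' ℓ : ℤ, (z ^ ℓ) •
        ((Bw ℓ).re • (1 : ℍ[ℂ]) - ((Bw ℓ).im / ‖q.im‖) • toC q.im)) *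
      (∑' ℓ : ℤ, (z ^ ℓ) • Bq ℓ) = (X ^ 2 + Y ^ 2) • 1 := by
    rw [hS, hT, key', hY2]
  -- main inverse computation
  have main : (X ^ 2 + Y ^ 2) ≠ 0 →
      (∑' ℓ : ℤ, (z ^ ℓ) • Bq ℓ) *
          ((X ^ 2 + Y ^ 2)⁻¹ • ∑' ℓ : ℤ, (z ^ ℓ) •
            ((Bw ℓ).re • (1 : ℍ[ℂ]) - ((Bw ℓ).im / ‖q.im‖) • toC q.im)) = 1 ∧
        ((X ^ 2 + Y ^ 2)⁻¹ • ∑' ℓ : ℤ, (z ^ ℓ) •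
            ((Bw ℓ).re • (1 : ℍ[ℂ]) - ((Bw ℓ).im / ‖q.im‖) • toC q.im)) *
          (∑' ℓ : ℤ, (z ^ ℓ) • Bq ℓ) = 1 := by
    intro hne
    constructor
    · rw [mul_smul_comm, hST, smul_smul, inv_mul_cancel₀ hne, one_smul]
    · rw [smul_mul_assoc, hTS, smul_smul, inv_mul_cancel₀ hne, one_smul]
  rw [hprod]
  constructor
  · constructor
    · intro hU
      intro h0
      -- from S*T = 0 and S unit, T = 0, hence X = 0 and Y = 0, hence S = 0, contradiction
      have hT0 : (∑' ℓ : ℤ, (z ^ ℓ) •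
          ((Bw ℓ).re • (1 : ℍ[ℂ]) - ((Bw ℓ).im / ‖q.im‖) • toC q.im)) = 0 := by
        have h1 := hST
        rw [h0, zero_smul] at h1
        calc (∑' ℓ : ℤ, (z ^ ℓ) •
              ((Bw ℓ).re • (1 : ℍ[ℂ]) - ((Bw ℓ).im / ‖q.im‖) • toC q.im))
            = (↑hU.unit⁻¹ * ∑' ℓ : ℤ, (z ^ ℓ) • Bq ℓ) * (∑' ℓ : ℤ, (z ^ ℓ) •
              ((Bw ℓ).re • (1 : ℍ[ℂ]) - ((Bw ℓ).im / ‖q.im‖) • toC q.im)) := by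
              rw [IsUnit.val_inv_mul, one_mul]
          _ = ↑hU.unit⁻¹ * ((∑' ℓ : ℤ, (z ^ ℓ) • Bq ℓ) * (∑' ℓ : ℤ, (z ^ ℓ) •
              ((Bw ℓ).re • (1 : ℍ[ℂ]) - ((Bw ℓ).im / ‖q.im‖) • toC q.im))) := by
              rw [mul_assoc]
          _ = 0 := by rw [h1, mul_zero]
      rw [hT] at hT0
      have hXzero : X = 0 := by
        have := congrArg QuaternionAlgebra.re hT0
        simpa [hure] using this
      have hYzero : (Y / n) • u = 0 := by
        rw [hXzero, zero_smul, zero_sub, neg_eq_zero] at hT0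
        exact hT0
      have hYn : Y / n = 0 := by
        rcases smul_eq_zero.mp hYzero with h | h
        · exact h
        · exact absurd h hune
      have hS0 : (∑' ℓ : ℤ, (z ^ ℓ) • Bq ℓ) = 0 := by
        rw [hS, hXzero, hYn, zero_smul, zero_smul, add_zero]
      rw [hS0] at hU
      exact hU.ne_zero rfl
    · intro hne
      exact ⟨⟨_, _, (main hne).1, (main hne).2⟩, rfl⟩
  · exact main
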